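/- Fix an integer m ≥ 1 and positive reals σ_1², …, σ_n². Let G^r be any reduced set for (σ_1², …, σ_n², m) with |G^r| ≥ 2m, and let L ⊆ G^r with |L| = 2m be a set of indices attaining the 2m largest values of σ_i² among i ∈ G^r. Then (1 − (∑_{i∈L} σ_i²) / (∑_{j∈G^r} σ_j²)) · ln(m) ≤ 4 · Ent(σ²_L). -/

import Mathlib

open Finset Real
open scoped Classical

/-- Entropy-like function `Ent(a_S) = -∑_{i∈S} (a_i/A) ln (a_i/A)` with `A = ∑_{j∈S} a_j`. -/
noncomputable def ent {ι : Type*} (S : Finset ι) (a : ι → ℝ) : ℝ :=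
  -∑ i ∈ S, (a i / ∑ j ∈ S, a j) * Real.log (a i / ∑ j ∈ S, a j)

/-- The minimum variance `σ̲² = min_{i∈[n]} σ_i²`. -/
noncomputable def sigMin (n : ℕ) [NeZero n] (σ : Fin n → ℝ) : ℝ :=
  Finset.univ.inf' Finset.univ_nonempty σ

/-- The `j`-th variance group `G_j = {i ∈ [n] : 2^{j-1} ≤ σ_i²/σ̲² < 2^j}` (for `j ≥ 1`). -/
noncomputable def grp (n : ℕ) [NeZero n] (σ : Fin n → ℝ) (j : ℕ) : Finset (Fin n) :=
  Finset.univ.filter fun i =>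
    (2 : ℝ) ^ (j - 1) ≤ σ i / sigMin n σ ∧ σ i / sigMin n σ < 2 ^ j

/-- `Gr` is a reduced set for `(σ², m)`: `Gr = ∪_j G'_j` where `G'_j = G_j` when
`|G_j| ≤ 2m`, and `G'_j` is an arbitrary `2m`-element subset of `G_j` otherwise. -/
def IsReducedSet (n : ℕ) [NeZero n] (m : ℕ) (σ : Fin n → ℝ) (Gr : Finset (Fin n)) : Prop :=
  ∃ G' : ℕ → Finset (Fin n),
    (∀ j : ℕ, 1 ≤ j →
      ((grp n σ j).card ≤ 2 * m → G' j = grp n σ j) ∧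
      (2 * m < (grp n σ j).card → G' j ⊆ grp n σ j ∧ (G' j).card = 2 * m)) ∧
    (Gr : Set (Fin n)) = ⋃ (j : ℕ) (_ : 1 ≤ j), (G' j : Set (Fin n))


lemma aux_log_fact_rank {ι : Type*} [DecidableEq ι] :
    ∀ (N : ℕ) (L : Finset ι) (σ : ι → ℝ), L.card = N →
      Real.log (Nat.factorial N : ℝ) ≤
        ∑ i ∈ L, Real.log (((L.filter fun k => σ i ≤ σ k)).card : ℝ) := by
  intro N
  induction N with
  | zero =>
    intro L σ h
    rw [Finset.card_eq_zero] at h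
    simp [h, Nat.factorial]
  | succ n ih =>
    intro L σ hcard
    have hne : L.Nonempty := by rw [← Finset.card_pos, hcard]; omega
    obtain ⟨i0, hi0, hmin⟩ := L.exists_min_image σ hne
    have hL' : (L.erase i0).card = n := by
      rw [Finset.card_erase_of_mem hi0, hcard]
      omega
    have key := ih (L.erase i0) σ hL'
    rw [← Finset.add_sum_erase L _ hi0]
    have hfact : (Nat.factorial (n+1) : ℝ) = (n+1 : ℕ) * (Nat.factorial n : ℝ) := by
      rw [Nat.factorial_succ]; push_cast; ring
    have hlog : Real.log (Nat.factorial (n+1) : ℝ)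
        = Real.log ((n+1 : ℕ) : ℝ) + Real.log (Nat.factorial n : ℝ) := by
      rw [hfact, Real.log_mul (by positivity) (by positivity)]
    rw [hlog]
    have h1 : (L.filter fun k => σ i0 ≤ σ k) = L := by
      apply Finset.filter_true_of_mem
      intro k hk; exact hmin k hk
    have h2 : Real.log ((n+1 : ℕ) : ℝ)
        ≤ Real.log (((L.filter fun k => σ i0 ≤ σ k)).card : ℝ) := by
      rw [h1, hcard]
    refine add_le_add h2 (le_trans key ?_)
    apply Finset.sum_le_sum
    intro i hi
    have hmono : ((L.erase i0).filter fun k => σ i ≤ σ k) ⊆ (L.filter fun k => σ i ≤ σ k) :=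
      Finset.filter_subset_filter _ (Finset.erase_subset _ _)
    have hpos : 0 < (((L.erase i0).filter fun k => σ i ≤ σ k)).card := by
      rw [Finset.card_pos]
      exact ⟨i, Finset.mem_filter.mpr ⟨hi, le_refl _⟩⟩
    apply Real.log_le_log (by exact_mod_cast hpos)
    exact_mod_cast Finset.card_le_card hmono

lemma aux_fact_sq (m : ℕ) : m ^ m ≤ (Nat.factorial m) ^ 2 := by
  have h1 : Nat.factorial m = ∏ k ∈ range m, (k + 1) := (Finset.prod_range_add_one_eq_factorial m).symm
  have h2 : Nat.factorial m = ∏ k ∈ range m, (m - k) := by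
    rw [h1]
    rw [← Finset.prod_range_reflect (fun j => j + 1) m]
    apply Finset.prod_congr rfl
    intro k hk
    rw [Finset.mem_range] at hk
    omega
  calc m ^ m = ∏ _k ∈ range m, m := by rw [Finset.prod_const, Finset.card_range]
    _ ≤ ∏ k ∈ range m, (k + 1) * (m - k) := by
        apply Finset.prod_le_prod'
        intro k hk
        rw [Finset.mem_range] at hk
        have hd : 1 ≤ m - k := by omega
        calc m = k + (m - k) := by omega
          _ ≤ k * (m-k) + (m - k) := by nlinarith
          _ = (k+1) * (m-k) := by ring
    _ = (Nat.factorial m)^2 := by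
        rw [Finset.prod_mul_distrib, ← h1, ← h2, sq]

lemma aux_fact_two (m : ℕ) : m ^ m * Nat.factorial m ≤ Nat.factorial (2 * m) := by
  have h1 : Nat.factorial (2*m) = Nat.factorial m * ∏ k ∈ range m, (m + k + 1) := by
    rw [← Finset.prod_range_add_one_eq_factorial, ← Finset.prod_range_add_one_eq_factorial,
      two_mul, Finset.prod_range_add]
  rw [h1, mul_comm]
  apply Nat.mul_le_mul_left
  calc m ^ m = ∏ _k ∈ range m, m := by rw [Finset.prod_const, Finset.card_range]
    _ ≤ ∏ k ∈ range m, (m + k + 1) := by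
        apply Finset.prod_le_prod'
        intro k _; omega

lemma aux_fact_pow (m : ℕ) : m ^ (3 * m) ≤ (Nat.factorial (2 * m)) ^ 2 := by
  calc m ^ (3*m) = m ^ m * (m ^ m * m ^ m) := by rw [← pow_add, ← pow_add]; ring_nf
    _ ≤ (Nat.factorial m)^2 * (m^m * m^m) := by
        exact Nat.mul_le_mul_right _ (aux_fact_sq m)
    _ = (m ^ m * Nat.factorial m)^2 := by ring
    _ ≤ (Nat.factorial (2*m))^2 := Nat.pow_le_pow_left (aux_fact_two m) 2

lemma aux_log_fact (m : ℕ) (hm : 1 ≤ m) :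
    (3 : ℝ)/2 * m * Real.log m ≤ Real.log (Nat.factorial (2*m) : ℝ) := by
  have h := aux_fact_pow m
  have h2 : Real.log ((m : ℝ) ^ (3*m)) ≤ Real.log (((Nat.factorial (2*m) : ℝ)) ^ 2) := by
    apply Real.log_le_log (by positivity)
    exact_mod_cast h
  rw [Real.log_pow, Real.log_pow] at h2
  push_cast at h2
  linarith

/-- **Lemma.** For `m ≥ 1`, a reduced set `G^r` with `|G^r| ≥ 2m`, and `L ⊆ G^r` the
`2m` indices with the largest variances in `G^r`,
`(1 - (∑_{i∈L} σ_i²)/(∑_{j∈G^r} σ_j²)) ln m ≤ 4 Ent(σ²_L)`. -/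
theorem stmt_11 (n m : ℕ) [NeZero n] (hm : 1 ≤ m)
    (σ : Fin n → ℝ) (hσ : ∀ i, 0 < σ i)
    (Gr : Finset (Fin n)) (hGr : IsReducedSet n m σ Gr) (hGrcard : 2 * m ≤ Gr.card)
    (L : Finset (Fin n)) (hLsub : L ⊆ Gr) (hLcard : L.card = 2 * m)
    (hLtop : ∀ i ∈ L, ∀ j ∈ Gr \ L, σ j ≤ σ i) :
    (1 - (∑ i ∈ L, σ i) / (∑ j ∈ Gr, σ j)) * Real.log m ≤ 4 * ent L σ := by
  obtain ⟨G', hG'spec, hGrU⟩ := hGr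
  set s : ℝ := sigMin n σ with hs_def
  have hs_le : ∀ i, s ≤ σ i := fun i => Finset.inf'_le _ (Finset.mem_univ i)
  have hs_pos : 0 < s := by
    obtain ⟨i, -, hi⟩ := Finset.exists_mem_eq_inf' Finset.univ_nonempty σ
    rw [hs_def, sigMin, hi]; exact hσ i
  -- L nonempty, minimum μ
  have hLne : L.Nonempty := by rw [← Finset.card_pos, hLcard]; omega
  obtain ⟨istar, histar, hmin⟩ := L.exists_min_image σ hLne
  set μ : ℝ := σ istar with hμ_def
  have hμpos : 0 < μ := hσ istar
  -- j0
  have hex : ∃ j : ℕ, μ / s < 2 ^ j := pow_unbounded_of_one_lt _ one_lt_two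
  set j0 := Nat.find hex with hj0_def
  have hj0spec : μ / s < 2 ^ j0 := Nat.find_spec hex
  have hj0pos : 1 ≤ j0 := by
    by_contra h
    have h0 : j0 = 0 := by omega
    have : μ / s < 1 := by simpa [h0] using hj0spec
    have : (1:ℝ) ≤ μ / s := (one_le_div hs_pos).mpr (hs_le istar)
    linarith
  have hj0lb : (2:ℝ) ^ (j0 - 1) ≤ μ / s := by
    have := Nat.find_min hex (m := j0 - 1) (by omega)
    linarith [not_lt.mp this]
  have hs2 : s * 2 ^ j0 ≤ 2 * μ := by
    have h1 : s * 2 ^ (j0 - 1) ≤ μ := by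
      rw [mul_comm, ← le_div_iff₀ hs_pos]; exact hj0lb
    have h2 : (2:ℝ) ^ j0 = 2 * 2 ^ (j0 - 1) := by
      rw [← pow_succ']
      congr 1
      omega
    rw [h2]; nlinarith
  -- properties of G'
  have hG'sub : ∀ j, 1 ≤ j → G' j ⊆ grp n σ j := by
    intro j hj
    rcases le_or_gt (grp n σ j).card (2*m) with h | h
    · rw [(hG'spec j hj).1 h]
    · exact ((hG'spec j hj).2 h).1
  have hG'card : ∀ j, 1 ≤ j → (G' j).card ≤ 2 * m := by
    intro j hj
    rcases le_or_gt (grp n σ j).card (2*m) with h | h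
    · rw [(hG'spec j hj).1 h]; exact h
    · exact le_of_eq ((hG'spec j hj).2 h).2
  -- membership of Gr\L
  set U := Gr \ L with hU_def
  have hUle : ∀ c ∈ U, σ c ≤ μ := fun c hc => hLtop istar histar c hc
  have hmem : ∀ c ∈ U, ∃ j, j ∈ Finset.Icc 1 j0 ∧ c ∈ G' j := by
    intro c hc
    have hcGr : c ∈ Gr := (Finset.mem_sdiff.mp hc).1
    have hcSet : (c : Fin n) ∈ (Gr : Set (Fin n)) := hcGr
    rw [hGrU] at hcSet
    simp only [Set.mem_iUnion, Finset.mem_coe] at hcSet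
    obtain ⟨j, hj1, hcj⟩ := hcSet
    have hgrp := hG'sub j hj1 hcj
    rw [grp, Finset.mem_filter] at hgrp
    have hlb : (2:ℝ)^(j-1) ≤ σ c / s := hgrp.2.1
    have hub : σ c / s ≤ μ / s := by gcongr; exact hUle c hc
    have hpow : (2:ℝ)^(j-1) < (2:ℝ)^j0 := lt_of_le_of_lt (le_trans hlb hub) hj0spec
    have hjj : j - 1 < j0 := by
      exact_mod_cast (pow_lt_pow_iff_right₀ (a := (2:ℝ)) one_lt_two).mp hpow
    exact ⟨j, Finset.mem_Icc.mpr ⟨hj1, by omega⟩, hcj⟩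
  -- the sum over U is at most 6 m μ
  have hDsum : ∑ c ∈ U, σ c ≤ 6 * m * μ := by
    have hsubU : U ⊆ (Finset.Icc 1 j0).biUnion (fun j => (G' j) ∩ U) := by
      intro c hc
      obtain ⟨j, hj, hcj⟩ := hmem c hc
      exact Finset.mem_biUnion.mpr ⟨j, hj, Finset.mem_inter.mpr ⟨hcj, hc⟩⟩
    have hdisj : (↑(Finset.Icc 1 j0) : Set ℕ).PairwiseDisjoint (fun j => (G' j) ∩ U) := by
      intro a ha b hb hab
      simp only [Finset.coe_Icc, Set.mem_Icc] at ha hb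
      apply Finset.disjoint_left.mpr
      intro x hxa hxb
      have h1 := hG'sub a ha.1 (Finset.mem_inter.mp hxa).1
      have h2 := hG'sub b hb.1 (Finset.mem_inter.mp hxb).1
      rw [grp, Finset.mem_filter] at h1 h2
      rcases Nat.lt_or_ge a b with h | h
      · have : (2:ℝ)^a ≤ 2^(b-1) := pow_le_pow_right₀ one_le_two (by omega)
        linarith [h1.2.2, h2.2.1]
      · have hba : b < a := by
          rcases h.lt_or_eq with h' | h'
          · exact h'
          · exact absurd h'.symm hab
        have : (2:ℝ)^b ≤ 2^(a-1) := pow_le_pow_right₀ one_le_two (by omega)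
        linarith [h2.2.2, h1.2.1]
    have step1 : ∑ c ∈ U, σ c ≤ ∑ j ∈ Finset.Icc 1 j0, ∑ c ∈ (G' j) ∩ U, σ c := by
      rw [← Finset.sum_biUnion hdisj]
      apply Finset.sum_le_sum_of_subset_of_nonneg hsubU
      intro i _ _; exact (hσ i).le
    -- split off j0
    have hsplit : Finset.Icc 1 j0 = insert j0 (Finset.Icc 1 (j0 - 1)) := by
      ext x
      simp only [Finset.mem_Icc, Finset.mem_insert]
      omega
    have hbound_lt : ∀ j ∈ Finset.Icc 1 (j0 - 1), ∑ c ∈ (G' j) ∩ U, σ c ≤ (2*m : ℝ) * (s * 2 ^ j) := by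
      intro j hj
      rw [Finset.mem_Icc] at hj
      have hone : ∀ c ∈ (G' j) ∩ U, σ c ≤ s * 2 ^ j := by
        intro c hc
        have h1 := hG'sub j hj.1 (Finset.mem_inter.mp hc).1
        rw [grp, Finset.mem_filter] at h1
        have := h1.2.2
        rw [div_lt_iff₀ hs_pos] at this
        linarith
      calc ∑ c ∈ (G' j) ∩ U, σ c ≤ ((G' j) ∩ U).card • (s * 2 ^ j) :=
            Finset.sum_le_card_nsmul _ _ _ hone
        _ = (((G' j) ∩ U).card : ℝ) * (s * 2 ^ j) := by rw [nsmul_eq_mul]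
        _ ≤ (2*m : ℝ) * (s * 2 ^ j) := by
            apply mul_le_mul_of_nonneg_right _ (by positivity)
            have : ((G' j) ∩ U).card ≤ 2 * m :=
              le_trans (Finset.card_le_card (Finset.inter_subset_left)) (hG'card j hj.1)
            exact_mod_cast this
    have hbound_j0 : ∑ c ∈ (G' j0) ∩ U, σ c ≤ (2*m : ℝ) * μ := by
      have hone : ∀ c ∈ (G' j0) ∩ U, σ c ≤ μ := fun c hc => hUle c (Finset.mem_inter.mp hc).2
      calc ∑ c ∈ (G' j0) ∩ U, σ c ≤ ((G' j0) ∩ U).card • μ := Finset.sum_le_card_nsmul _ _ _ hone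
        _ = (((G' j0) ∩ U).card : ℝ) * μ := by rw [nsmul_eq_mul]
        _ ≤ (2*m : ℝ) * μ := by
            apply mul_le_mul_of_nonneg_right _ hμpos.le
            have : ((G' j0) ∩ U).card ≤ 2 * m :=
              le_trans (Finset.card_le_card (Finset.inter_subset_left)) (hG'card j0 hj0pos)
            exact_mod_cast this
    have hgeom : ∑ j ∈ Finset.Icc 1 (j0-1), (2*m : ℝ) * (s * 2 ^ j) ≤ (2*m : ℝ) * (s * 2 ^ j0) := by
      have h1 : ∑ j ∈ Finset.Icc 1 (j0-1), (2*m : ℝ) * (s * 2 ^ j)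
          = (2*m : ℝ) * s * ∑ j ∈ Finset.Icc 1 (j0-1), (2:ℝ) ^ j := by
        rw [Finset.mul_sum]; apply Finset.sum_congr rfl; intro j _; ring
      have hsubR : Finset.Icc 1 (j0-1) ⊆ Finset.range j0 := by
        intro x hx
        rw [Finset.mem_Icc] at hx
        rw [Finset.mem_range]
        omega
      have h2 : ∑ j ∈ Finset.Icc 1 (j0-1), (2:ℝ) ^ j ≤ ∑ j ∈ Finset.range j0, (2:ℝ) ^ j :=
        Finset.sum_le_sum_of_subset_of_nonneg hsubR (fun i _ _ => by positivity)
      have h3 : ∑ j ∈ Finset.range j0, (2:ℝ) ^ j = 2 ^ j0 - 1 := by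
        rw [geom_sum_eq (by norm_num)]; ring
      rw [h1]
      have h4 : ∑ j ∈ Finset.Icc 1 (j0-1), (2:ℝ) ^ j ≤ 2 ^ j0 := by
        rw [h3] at h2; linarith
      nlinarith [mul_nonneg (by positivity : (0:ℝ) ≤ (2*m:ℝ)) hs_pos.le]
    calc ∑ c ∈ U, σ c ≤ ∑ j ∈ Finset.Icc 1 j0, ∑ c ∈ (G' j) ∩ U, σ c := step1
      _ = ∑ c ∈ (G' j0) ∩ U, σ c + ∑ j ∈ Finset.Icc 1 (j0-1), ∑ c ∈ (G' j) ∩ U, σ c := by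
          rw [hsplit, Finset.sum_insert (by rw [Finset.mem_Icc]; omega)]
      _ ≤ (2*m : ℝ) * μ + ∑ j ∈ Finset.Icc 1 (j0-1), (2*m : ℝ) * (s * 2 ^ j) :=
          add_le_add hbound_j0 (Finset.sum_le_sum hbound_lt)
      _ ≤ (2*m : ℝ) * μ + (2*m : ℝ) * (s * 2 ^ j0) := by linarith [hgeom]
      _ ≤ (2*m : ℝ) * μ + (2*m : ℝ) * (2 * μ) := by
          have : (0:ℝ) ≤ 2*m := by positivity
          nlinarith
      _ = 6 * m * μ := by ring
  -- sums
  set Sv := ∑ i ∈ L, σ i with hSv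
  set Tv := ∑ j ∈ Gr, σ j with hTv
  set Dv := ∑ c ∈ U, σ c with hDv
  have hSpos : 0 < Sv := Finset.sum_pos (fun i _ => hσ i) hLne
  have hTS : Tv = Dv + Sv := (Finset.sum_sdiff hLsub).symm
  have hDnonneg : 0 ≤ Dv := Finset.sum_nonneg fun i _ => (hσ i).le
  have hTpos : 0 < Tv := by rw [hTS]; linarith
  have hSleT : Sv ≤ Tv := by rw [hTS]; linarith
  -- entropy bound
  have hEnt : (μ / Sv) * Real.log (Nat.factorial (2*m) : ℝ) ≤ ent L σ := by
    have hmaster : ∀ i ∈ L, (μ / Sv) * Real.log (((L.filter fun k => σ i ≤ σ k)).card : ℝ)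
        ≤ -((σ i / Sv) * Real.log (σ i / Sv)) := by
      intro i hi
      set r := ((L.filter fun k => σ i ≤ σ k)).card with hr
      have hrpos : 0 < r := Finset.card_pos.mpr ⟨i, Finset.mem_filter.mpr ⟨hi, le_refl _⟩⟩
      have hrS : (r : ℝ) * σ i ≤ Sv := by
        calc (r:ℝ) * σ i = ∑ _k ∈ (L.filter fun k => σ i ≤ σ k), σ i := by
              rw [Finset.sum_const, nsmul_eq_mul]
          _ ≤ ∑ k ∈ (L.filter fun k => σ i ≤ σ k), σ k :=
              Finset.sum_le_sum (fun k hk => (Finset.mem_filter.mp hk).2)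
          _ ≤ Sv := Finset.sum_le_sum_of_subset_of_nonneg (Finset.filter_subset _ _)
              (fun k _ _ => (hσ k).le)
      have hlogr : Real.log (r : ℝ) ≤ Real.log (Sv / σ i) := by
        apply Real.log_le_log (by exact_mod_cast hrpos)
        rw [le_div_iff₀ (hσ i)]; exact hrS
      have hflip : -((σ i / Sv) * Real.log (σ i / Sv)) = (σ i / Sv) * Real.log (Sv / σ i) := by
        rw [Real.log_div (hσ i).ne' hSpos.ne', Real.log_div hSpos.ne' (hσ i).ne']; ring
      rw [hflip]
      have h0 : 0 ≤ Real.log (r : ℝ) := Real.log_natCast_nonneg r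
      have hμσ : μ / Sv ≤ σ i / Sv := by gcongr; exact hmin i hi
      calc (μ/Sv) * Real.log (r:ℝ) ≤ (σ i/Sv) * Real.log (r:ℝ) :=
            mul_le_mul_of_nonneg_right hμσ h0
        _ ≤ (σ i/Sv) * Real.log (Sv / σ i) := mul_le_mul_of_nonneg_left hlogr (div_nonneg (hσ i).le hSpos.le)
    have hsum := Finset.sum_le_sum hmaster
    have hentdef : ent L σ = ∑ i ∈ L, -((σ i / Sv) * Real.log (σ i / Sv)) := by
      rw [ent, ← Finset.sum_neg_distrib]
    have hfac := aux_log_fact_rank (2*m) L σ hLcard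
    have hstep : (μ / Sv) * Real.log (Nat.factorial (2*m) : ℝ)
        ≤ ∑ i ∈ L, (μ / Sv) * Real.log (((L.filter fun k => σ i ≤ σ k)).card : ℝ) := by
      rw [← Finset.mul_sum]
      exact mul_le_mul_of_nonneg_left hfac (by positivity)
    rw [hentdef]
    exact le_trans hstep hsum
  -- final algebra
  have hlogm : 0 ≤ Real.log m := Real.log_natCast_nonneg m
  have hF := aux_log_fact m hm
  have h1 : 1 - Sv/Tv = Dv/Tv := by
    rw [hTS]; field_simp; ring
  calc (1 - Sv/Tv) * Real.log m = (Dv/Tv) * Real.log m := by rw [h1]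
    _ ≤ (Dv/Sv) * Real.log m := by
        apply mul_le_mul_of_nonneg_right _ hlogm
        gcongr
    _ ≤ (6*m*μ/Sv) * Real.log m := by
        apply mul_le_mul_of_nonneg_right _ hlogm
        gcongr
    _ = (μ/Sv) * (6 * m * Real.log m) := by ring
    _ ≤ (μ/Sv) * (4 * Real.log (Nat.factorial (2*m) : ℝ)) := by
        apply mul_le_mul_of_nonneg_left _ (by positivity)
        linarith
    _ = 4 * ((μ/Sv) * Real.log (Nat.factorial (2*m) : ℝ)) := by ring
    _ ≤ 4 * ent L σ := by linarith
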